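/- Let m ≥ 1 and let L_1, …, L_m be i.i.d. real random variables with b₋ ≤ L_i ≤ b₊ almost surely and E[L_i] = −a with a > 0, and set b = b₊ − b₋ > 0. Then E[max(Σ_{i=1}^m L_i, 0)] ≤ (b²/(4a))·e^{−2ma²/b²}. -/

import Mathlib

open MeasureTheory ProbabilityTheory

lemma hoeff_scalar (p : ℝ) (hp0 : 0 ≤ p) (hp1 : p ≤ 1) (h : ℝ) :
    1 - p + p * Real.exp h ≤ Real.exp (p * h + h ^ 2 / 8) := by
  have hD : ∀ x : ℝ, 0 < 1 - p + p * Real.exp x := by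
    intro x
    rcases hp0.lt_or_eq with hp | hp
    · have : 0 < p * Real.exp x := mul_pos hp (Real.exp_pos x)
      linarith
    · simp [← hp]
  set g : ℝ → ℝ := fun x => p * x + x ^ 2 / 8 - Real.log (1 - p + p * Real.exp x) with hgdef
  set g' : ℝ → ℝ := fun x => p + x / 4 - p * Real.exp x / (1 - p + p * Real.exp x) with hg'def
  have hDd : ∀ x : ℝ, HasDerivAt (fun y => 1 - p + p * Real.exp y) (p * Real.exp x) x := by
    intro x
    simpa using ((Real.hasDerivAt_exp x).const_mul p).const_add (1 - p)
  have hg : ∀ x, HasDerivAt g (g' x) x := by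
    intro x
    have h2 : HasDerivAt (fun y => Real.log (1 - p + p * Real.exp y))
        (p * Real.exp x / (1 - p + p * Real.exp x)) x := (hDd x).log (hD x).ne'
    have h3 : HasDerivAt (fun y : ℝ => p * y + y ^ 2 / 8) (p + x / 4) x := by
      have := ((hasDerivAt_id x).const_mul p).add ((hasDerivAt_pow 2 x).div_const 8)
      refine this.congr_deriv ?_
      ring
    exact h3.sub h2
  have hg' : ∀ x, HasDerivAt g'
      (1 / 4 - p * Real.exp x * (1 - p) / (1 - p + p * Real.exp x) ^ 2) x := by
    intro x
    have hnum : HasDerivAt (fun y => p * Real.exp y) (p * Real.exp x) x :=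
      (Real.hasDerivAt_exp x).const_mul p
    have hdiv : HasDerivAt (fun y => p * Real.exp y / (1 - p + p * Real.exp y))
        ((p * Real.exp x * (1 - p + p * Real.exp x) - p * Real.exp x * (p * Real.exp x)) /
          (1 - p + p * Real.exp x) ^ 2) x := hnum.div (hDd x) (hD x).ne'
    have h3 : HasDerivAt (fun y : ℝ => p + y / 4) (1 / 4) x := by
      simpa using ((hasDerivAt_id x).div_const 4).const_add p
    refine (h3.sub hdiv).congr_deriv ?_
    have := (hD x).ne'
    field_simp
    ring
  have hg'' : ∀ x : ℝ, 0 ≤ 1 / 4 - p * Real.exp x * (1 - p) / (1 - p + p * Real.exp x) ^ 2 := by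
    intro x
    rw [sub_nonneg, div_le_iff₀ (pow_pos (hD x) 2)]
    nlinarith [sq_nonneg ((1 - p) - p * Real.exp x), Real.exp_pos x,
      mul_nonneg hp0 (Real.exp_pos x).le]
  have hg'mono : Monotone g' :=
    monotone_of_deriv_nonneg (fun x => (hg' x).differentiableAt)
      (fun x => by rw [(hg' x).deriv]; exact hg'' x)
  have hg'0 : g' 0 = 0 := by simp [hg'def]
  have hgd : Differentiable ℝ g := fun x => (hg x).differentiableAt
  have hg0 : g 0 = 0 := by simp [hgdef]
  have key : 0 ≤ g h := by
    rcases le_or_gt 0 h with hh | hh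
    · have mono : MonotoneOn g (Set.Ici 0) := by
        apply monotoneOn_of_deriv_nonneg (convex_Ici 0) hgd.continuous.continuousOn
          hgd.differentiableOn
        intro x hx
        rw [(hg x).deriv, ← hg'0]
        exact hg'mono (le_of_lt (by simpa using hx))
      have := mono Set.self_mem_Ici (show h ∈ Set.Ici 0 from hh) hh
      rwa [hg0] at this
    · have anti : AntitoneOn g (Set.Iic 0) := by
        apply antitoneOn_of_deriv_nonpos (convex_Iic 0) hgd.continuous.continuousOn
          hgd.differentiableOn
        intro x hx
        rw [(hg x).deriv, ← hg'0]
        exact hg'mono (le_of_lt (by simpa using hx))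
      have := anti (show h ∈ Set.Iic 0 from hh.le) Set.self_mem_Iic hh.le
      rwa [hg0] at this
  have hlog : Real.log (1 - p + p * Real.exp h) ≤ p * h + h ^ 2 / 8 := by
    simp only [hgdef] at key
    linarith
  calc 1 - p + p * Real.exp h = Real.exp (Real.log (1 - p + p * Real.exp h)) :=
        (Real.exp_log (hD h)).symm
    _ ≤ Real.exp (p * h + h ^ 2 / 8) := Real.exp_le_exp.mpr hlog

lemma int_of_bounded {Ω : Type*} [MeasurableSpace Ω] {μ : Measure Ω} [IsProbabilityMeasure μ]
    {X : Ω → ℝ} (hX : Measurable X) {lo hi : ℝ}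
    (hbd : ∀ᵐ ω ∂μ, X ω ∈ Set.Icc lo hi) : Integrable X μ := by
  refine Integrable.mono' (integrable_const (|lo| + |hi|)) hX.aestronglyMeasurable ?_
  filter_upwards [hbd] with ω hω
  have h1 := hω.1; have h2 := hω.2
  have := neg_abs_le lo; have := le_abs_self hi
  have := abs_nonneg lo; have := abs_nonneg hi
  rw [Real.norm_eq_abs, abs_le]; constructor <;> linarith

lemma exp_int_of_bounded {Ω : Type*} [MeasurableSpace Ω] {μ : Measure Ω} [IsProbabilityMeasure μ]
    {X : Ω → ℝ} (hX : Measurable X) {lo hi : ℝ}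
    (hbd : ∀ᵐ ω ∂μ, X ω ∈ Set.Icc lo hi) (t : ℝ) :
    Integrable (fun ω => Real.exp (t * X ω)) μ := by
  refine Integrable.mono' (integrable_const (Real.exp (|t| * (|lo| + |hi|))))
    ((hX.const_mul t).exp).aestronglyMeasurable ?_
  filter_upwards [hbd] with ω hω
  rw [Real.norm_eq_abs, abs_of_pos (Real.exp_pos _)]
  apply Real.exp_le_exp.mpr
  have hx : |X ω| ≤ |lo| + |hi| := by
    have h1 := hω.1; have h2 := hω.2
    have := neg_abs_le lo; have := le_abs_self hi
    have := abs_nonneg lo; have := abs_nonneg hi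
    rw [abs_le]; constructor <;> linarith
  calc t * X ω ≤ |t * X ω| := le_abs_self _
    _ = |t| * |X ω| := abs_mul _ _
    _ ≤ |t| * (|lo| + |hi|) := by apply mul_le_mul_of_nonneg_left hx (abs_nonneg t)

/-- Hoeffding's lemma. -/
lemma hoeff_mgf {Ω : Type*} [MeasurableSpace Ω] (μ : Measure Ω) [IsProbabilityMeasure μ]
    (X : Ω → ℝ) (hX : Measurable X) (lo hi : ℝ) (hlh : lo < hi)
    (hbd : ∀ᵐ ω ∂μ, X ω ∈ Set.Icc lo hi) (t : ℝ) :
    ∫ ω, Real.exp (t * X ω) ∂μ ≤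
      Real.exp (t * (∫ ω, X ω ∂μ) + t ^ 2 * (hi - lo) ^ 2 / 8) := by
  have hb : (0:ℝ) < hi - lo := by linarith
  have hXint : Integrable X μ := int_of_bounded hX hbd
  set c : ℝ := ∫ ω, X ω ∂μ with hc
  set A : ℝ := Real.exp (t * lo) with hA
  set B : ℝ := Real.exp (t * hi) with hB
  have hc_hi : c ≤ hi := by
    have h1 : c ≤ ∫ _, hi ∂μ :=
      integral_mono_ae hXint (integrable_const hi) (hbd.mono fun ω h => h.2)
    simpa using h1
  have hc_lo : lo ≤ c := by
    have h1 : (∫ _, lo ∂μ) ≤ c :=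
      integral_mono_ae (integrable_const lo) hXint (hbd.mono fun ω h => h.1)
    simpa using h1
  set p : ℝ := (c - lo) / (hi - lo) with hp
  have hp0 : 0 ≤ p := div_nonneg (by linarith) hb.le
  have hp1 : p ≤ 1 := by
    rw [hp, div_le_one hb]; linarith
  -- pointwise convexity bound
  have hconv : ∀ᵐ ω ∂μ, Real.exp (t * X ω) ≤
      (hi * A - lo * B) / (hi - lo) + (B - A) / (hi - lo) * X ω := by
    filter_upwards [hbd] with ω hω
    set x := X ω
    have hθ : (0:ℝ) ≤ (hi - x) / (hi - lo) := div_nonneg (by linarith [hω.2]) hb.le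
    have hη : (0:ℝ) ≤ (x - lo) / (hi - lo) := div_nonneg (by linarith [hω.1]) hb.le
    have hsum : (hi - x) / (hi - lo) + (x - lo) / (hi - lo) = 1 := by
      rw [← add_div, show hi - x + (x - lo) = hi - lo by ring, div_self hb.ne']
    have := convexOn_exp.2 (Set.mem_univ (t * lo)) (Set.mem_univ (t * hi)) hθ hη hsum
    simp only [smul_eq_mul] at this
    have harg : (hi - x) / (hi - lo) * (t * lo) + (x - lo) / (hi - lo) * (t * hi) = t * x := by
      field_simp
      ring
    rw [harg] at this
    calc Real.exp (t * x) ≤ (hi - x) / (hi - lo) * Real.exp (t * lo)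
          + (x - lo) / (hi - lo) * Real.exp (t * hi) := this
      _ = (hi * A - lo * B) / (hi - lo) + (B - A) / (hi - lo) * x := by
          rw [hA, hB]
          field_simp
          ring
  have hexp_int : Integrable (fun ω => Real.exp (t * X ω)) μ := exp_int_of_bounded hX hbd t
  have hlin_int : Integrable (fun ω => (hi * A - lo * B) / (hi - lo)
      + (B - A) / (hi - lo) * X ω) μ :=
    (integrable_const _).add (hXint.const_mul _)
  have step1 : ∫ ω, Real.exp (t * X ω) ∂μ ≤
      (hi * A - lo * B) / (hi - lo) + (B - A) / (hi - lo) * c := by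
    have := integral_mono_ae hexp_int hlin_int hconv
    rwa [integral_add (integrable_const _) (hXint.const_mul _), integral_const_mul,
      integral_const, probReal_univ, smul_eq_mul, one_mul] at this
  have hAB : B = A * Real.exp (t * (hi - lo)) := by
    rw [hA, hB, ← Real.exp_add]
    congr 1
    ring
  have step2 : (hi * A - lo * B) / (hi - lo) + (B - A) / (hi - lo) * c
      = A * (1 - p + p * Real.exp (t * (hi - lo))) := by
    rw [hAB, hp]
    field_simp
    ring
  have step3 : A * (1 - p + p * Real.exp (t * (hi - lo)))
      ≤ A * Real.exp (p * (t * (hi - lo)) + (t * (hi - lo)) ^ 2 / 8) :=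
    mul_le_mul_of_nonneg_left (hoeff_scalar p hp0 hp1 (t * (hi - lo))) (Real.exp_pos _).le
  have step4 : A * Real.exp (p * (t * (hi - lo)) + (t * (hi - lo)) ^ 2 / 8)
      = Real.exp (t * c + t ^ 2 * (hi - lo) ^ 2 / 8) := by
    rw [hA, ← Real.exp_add]
    congr 1
    rw [hp]
    field_simp
    ring
  calc ∫ ω, Real.exp (t * X ω) ∂μ
      ≤ (hi * A - lo * B) / (hi - lo) + (B - A) / (hi - lo) * c := step1
    _ = A * (1 - p + p * Real.exp (t * (hi - lo))) := step2
    _ ≤ A * Real.exp (p * (t * (hi - lo)) + (t * (hi - lo)) ^ 2 / 8) := step3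
    _ = Real.exp (t * c + t ^ 2 * (hi - lo) ^ 2 / 8) := step4

/-- Hoeffding bound on the expected positive part.
If `L_1,…,L_m` are i.i.d. with `bLo ≤ L_i ≤ bHi` a.s., `E[L_i] = −a < 0`, and
`b = bHi − bLo > 0`, then `E[max(Σ L_i, 0)] ≤ (b²/(4a))·e^{−2ma²/b²}`. -/
theorem stmt14 {Ω : Type*} [MeasurableSpace Ω] (μ : Measure Ω) [IsProbabilityMeasure μ]
    (m : ℕ) (hm : 1 ≤ m) (L : Fin m → Ω → ℝ)
    (hmeas : ∀ i, Measurable (L i))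
    (hindep : iIndepFun L μ)
    (hident : ∀ i j, IdentDistrib (L i) (L j) μ μ)
    (a bLo bHi : ℝ) (ha : 0 < a) (hb : 0 < bHi - bLo)
    (hbound : ∀ i, ∀ᵐ ω ∂μ, L i ω ∈ Set.Icc bLo bHi)
    (hmean : ∀ i, ∫ ω, L i ω ∂μ = -a) :
    ∫ ω, max (∑ i, L i ω) 0 ∂μ
      ≤ (bHi - bLo) ^ 2 / (4 * a) * Real.exp (-(2 * m * a ^ 2 / (bHi - bLo) ^ 2)) := by
  set b2 : ℝ := (bHi - bLo) ^ 2 with hb2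
  have hb2pos : 0 < b2 := by positivity
  set lam : ℝ := 4 * a / b2 with hlam
  have hlampos : 0 < lam := by positivity
  have hlh : bLo < bHi := by linarith
  -- integrability facts
  have hLint : ∀ i, Integrable (L i) μ := fun i => int_of_bounded (hmeas i) (hbound i)
  have hexpint : ∀ i, Integrable (fun ω => Real.exp (lam * L i ω)) μ := fun i =>
    exp_int_of_bounded (hmeas i) (hbound i) lam
  have hSexp : Integrable (fun ω => Real.exp (lam * (∑ i, L i) ω)) μ :=
    hindep.integrable_exp_mul_sum hmeas (fun i _ => hexpint i)
  have hSexp' : Integrable (fun ω => Real.exp (lam * ∑ i, L i ω)) μ := by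
    simpa [Finset.sum_apply] using hSexp
  have hSint : Integrable (fun ω => ∑ i, L i ω) μ := integrable_finset_sum _ fun i _ => hLint i
  have hmaxint : Integrable (fun ω => max (∑ i, L i ω) 0) μ := hSint.pos_part
  -- pointwise bound max(x,0) ≤ exp(lam x) * (exp(-1)/lam)
  have hpt : ∀ x : ℝ, max x 0 ≤ Real.exp (lam * x) * (Real.exp (-1) / lam) := by
    intro x
    have h1 : lam * x ≤ Real.exp (lam * x - 1) := by
      have := Real.add_one_le_exp (lam * x - 1)
      linarith
    have h2 : Real.exp (lam * x - 1) = Real.exp (lam * x) * Real.exp (-1) := by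
      rw [← Real.exp_add]; ring_nf
    apply max_le
    · rw [← mul_div_assoc, le_div_iff₀ hlampos]
      calc x * lam = lam * x := mul_comm _ _
        _ ≤ Real.exp (lam * x - 1) := h1
        _ = Real.exp (lam * x) * Real.exp (-1) := h2
    · positivity
  have step1 : ∫ ω, max (∑ i, L i ω) 0 ∂μ
      ≤ ∫ ω, Real.exp (lam * ∑ i, L i ω) * (Real.exp (-1) / lam) ∂μ :=
    integral_mono hmaxint (hSexp'.mul_const _) (fun ω => hpt _)
  have step2 : ∫ ω, Real.exp (lam * ∑ i, L i ω) * (Real.exp (-1) / lam) ∂μ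
      = mgf (∑ i, L i) μ lam * (Real.exp (-1) / lam) := by
    rw [integral_mul_const]
    congr 1
    unfold mgf
    simp [Finset.sum_apply]
  have step3 : mgf (∑ i, L i) μ lam = ∏ i, mgf (L i) μ lam :=
    hindep.mgf_sum hmeas Finset.univ
  have step4 : ∀ i, mgf (L i) μ lam ≤ Real.exp (lam * (-a) + lam ^ 2 * b2 / 8) := by
    intro i
    have := hoeff_mgf μ (L i) (hmeas i) bLo bHi hlh (hbound i) lam
    rwa [hmean i] at this
  have step5 : (∏ i, mgf (L i) μ lam) ≤ Real.exp (lam * (-a) + lam ^ 2 * b2 / 8) ^ m := by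
    calc (∏ i, mgf (L i) μ lam) ≤ ∏ _i : Fin m, Real.exp (lam * (-a) + lam ^ 2 * b2 / 8) :=
          Finset.prod_le_prod (fun i _ => mgf_nonneg) (fun i _ => step4 i)
      _ = Real.exp (lam * (-a) + lam ^ 2 * b2 / 8) ^ m := by
          rw [Finset.prod_const, Finset.card_univ, Fintype.card_fin]
  have hexpon : Real.exp (lam * (-a) + lam ^ 2 * b2 / 8) ^ m
      = Real.exp (-(2 * m * a ^ 2 / b2)) := by
    rw [← Real.exp_nat_mul]
    congr 1
    rw [hlam]
    field_simp
    ring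
  have hmgfnn : 0 ≤ mgf (∑ i, L i) μ lam := mgf_nonneg
  calc ∫ ω, max (∑ i, L i ω) 0 ∂μ
      ≤ mgf (∑ i, L i) μ lam * (Real.exp (-1) / lam) := step1.trans_eq step2
    _ ≤ Real.exp (-(2 * m * a ^ 2 / b2)) * (Real.exp (-1) / lam) := by
        apply mul_le_mul_of_nonneg_right _ (by positivity)
        rw [step3]
        exact step5.trans_eq hexpon
    _ ≤ b2 / (4 * a) * Real.exp (-(2 * m * a ^ 2 / b2)) := by
        rw [mul_comm]
        apply mul_le_mul_of_nonneg_right _ (Real.exp_pos _).le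
        calc Real.exp (-1) / lam ≤ 1 / lam := by
              gcongr
              exact Real.exp_le_one_iff.mpr (by norm_num)
          _ = b2 / (4 * a) := by rw [hlam, one_div_div]
    _ = (bHi - bLo) ^ 2 / (4 * a) * Real.exp (-(2 * m * a ^ 2 / (bHi - bLo) ^ 2)) := by
        rw [hb2]
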